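/- Let σ be an invertible substitution of size (M,M) over a finite alphabet A, and suppose every pattern of L(X^σ) whose support contains the square {0,…,ρ−1}² can be uniquely desubstituted by σ. Then for every k ≥ 1, every pattern of L(X^σ) whose support contains {0,…,(ρ+1)M^{k−1} − 2}² can be uniquely desubstituted by σ^k. -/

import Mathlib

/-- A configuration: a coloring of `ℤ²` by the alphabet `A`. -/
abbrev Config (A : Type*) := ℤ × ℤ → A

/-- A pattern `p` with (finite) support `D` appears in a configuration `c`:
there is `u ∈ ℤ²` with `p v = c (v - u)` for all `v ∈ D`. -/
def AppearsInConfig {A : Type*} (D : Set (ℤ × ℤ)) (p : ℤ × ℤ → A)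
    (c : Config A) : Prop :=
  ∃ u : ℤ × ℤ, ∀ v ∈ D, p v = c (v - u)

/-- A pattern `p` with support `D` appears in a pattern `q` with support `D'`. -/
def AppearsInPattern {A : Type*} (D : Set (ℤ × ℤ)) (p : ℤ × ℤ → A)
    (D' : Set (ℤ × ℤ)) (q : ℤ × ℤ → A) : Prop :=
  ∃ u : ℤ × ℤ, ∀ v ∈ D, v - u ∈ D' ∧ p v = q (v - u)

/-- A two-dimensional substitution over alphabet `A`. -/
def Subst (A : Type*) := A → ℕ → ℕ → A

/-- Composition of a substitution `σ` of size `(m,n)` with `σ'`. -/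
def compSub {A : Type*} (m n : ℕ) (σ σ' : Subst A) : Subst A :=
  fun a x y => σ (σ' a (x / m) (y / n)) (x % m) (y % n)

/-- The `k`-th iterate of a substitution `σ` of size `(m,n)`. -/
def iterSub {A : Type*} (m n : ℕ) (σ : Subst A) : ℕ → Subst A
  | 0 => fun a _ _ => a
  | k + 1 => compSub m n σ (iterSub m n σ k)

/-- Application of a substitution `σ` of size `(m,n)` to a pattern or
configuration (given as a function on `ℤ²`), by block replacement: the cell at
`u` is replaced by the block `σ(p_u)` with lower-left corner at `(m·u₁, n·u₂)`. -/
def substApply {A : Type*} (m n : ℕ) (σ : Subst A) (p : ℤ × ℤ → A) : ℤ × ℤ → A :=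
  fun v => σ (p (v.1.fdiv m, v.2.fdiv n)) (v.1.fmod m).toNat (v.2.fmod n).toNat

/-- Support of `σ(p)` when `p` has support `D`: the union of the blocks
`m·u + {0,…,m−1} × n·u + {0,…,n−1}` over `u ∈ D`. -/
def blowSupport (m n : ℕ) (D : Set (ℤ × ℤ)) : Set (ℤ × ℤ) :=
  {v | (v.1.fdiv m, v.2.fdiv n) ∈ D}

/-- The pattern `σ^k(a)`, supported on `{0,…,m^k−1} × {0,…,n^k−1}`. -/
def letterPattern {A : Type*} (m n : ℕ) (σ : Subst A) (k : ℕ) (a : A) :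
    ℤ × ℤ → A :=
  fun v => iterSub m n σ k a v.1.toNat v.2.toNat

/-- The support `{0,…,m^k−1} × {0,…,n^k−1}` of `σ^k(a)`. -/
def letterSupport (m n k : ℕ) : Set (ℤ × ℤ) :=
  {v | 0 ≤ v.1 ∧ v.1 < (m : ℤ) ^ k ∧ 0 ≤ v.2 ∧ v.2 < (n : ℤ) ^ k}

/-- The substitutive subshift `X^σ`: configurations all of whose finite
patterns appear in `σ^k(a)` for some letter `a` and some `k`. -/
def Xsub {A : Type*} (m n : ℕ) (σ : Subst A) : Set (Config A) :=
  {c | ∀ D : Set (ℤ × ℤ), D.Finite →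
    ∃ (a : A) (k : ℕ),
      AppearsInPattern D c (letterSupport m n k) (letterPattern m n σ k a)}

/-- `σ` (of size `(m,n)`) is primitive: some power `σ^k` maps every letter to
a block in which every letter appears. -/
def Primitive {A : Type*} (m n : ℕ) (σ : Subst A) : Prop :=
  ∃ k : ℕ, ∀ a b : A, ∃ i j : ℕ,
    i < m ^ k ∧ j < n ^ k ∧ iterSub m n σ k b i j = a


/-- The square `{0,…,r−1}²` in `ℤ²`. -/
def sqSet (r : ℕ) : Set (ℤ × ℤ) :=
  {v | 0 ≤ v.1 ∧ v.1 < (r : ℤ) ∧ 0 ≤ v.2 ∧ v.2 < (r : ℤ)}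

/-- A substitution of size `(m,n)` is invertible: distinct letters have
distinct image blocks. -/
def Invertible' {A : Type*} (m n : ℕ) (σ : Subst A) : Prop :=
  ∀ a b : A, (∀ i < m, ∀ j < n, σ a i j = σ b i j) → a = b

/-- A pattern `p` with support `D` can be uniquely desubstituted by the
substitution `τ` of size `(m,n)` relative to the subshift `Xs`: there is
`t ∈ ℤ²`, unique modulo `(m,n)`, with `p = τ_t(τ(c))|_D` for some `c ∈ Xs`. -/
def UniqueDesub {A : Type*} (m n : ℕ) (τ : Subst A) (Xs : Set (Config A))
    (D : Set (ℤ × ℤ)) (p : ℤ × ℤ → A) : Prop :=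
  (∃ t : ℤ × ℤ, ∃ c ∈ Xs, ∀ v ∈ D, p v = substApply m n τ c (v - t)) ∧
  ∀ t t' : ℤ × ℤ,
    (∃ c ∈ Xs, ∀ v ∈ D, p v = substApply m n τ c (v - t)) →
    (∃ c ∈ Xs, ∀ v ∈ D, p v = substApply m n τ c (v - t')) →
    t.1 % (m : ℤ) = t'.1 % (m : ℤ) ∧ t.2 % (n : ℤ) = t'.2 % (n : ℤ)

namespace Helper


lemma fd_eq (a : ℤ) (m : ℕ) : a.fdiv (m:ℤ) = a / (m:ℤ) :=
  Int.fdiv_eq_ediv_of_nonneg a (by positivity)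

lemma fm_eq (a : ℤ) (m : ℕ) : a.fmod (m:ℤ) = a % (m:ℤ) :=
  Int.fmod_eq_emod_of_nonneg a (by positivity)

lemma fmod_nonneg' {M : ℕ} (hM : 0 < M) (a : ℤ) : 0 ≤ a.fmod (M:ℤ) := by
  rw [fm_eq]; exact Int.emod_nonneg a (by exact_mod_cast hM.ne')

lemma fmod_lt' {M : ℕ} (hM : 0 < M) (a : ℤ) : a.fmod (M:ℤ) < M := by
  rw [fm_eq]; exact Int.emod_lt_of_pos a (by exact_mod_cast hM)

lemma toNat_fmod_lt {M : ℕ} (hM : 0 < M) (a : ℤ) : (a.fmod (M:ℤ)).toNat < M := by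
  have h1 := fmod_nonneg' hM a
  have h2 := fmod_lt' hM a
  omega

/-- the base decomposition -/
lemma split_pack {M N : ℕ} (hM : 0 < M) (hN : 0 < N) (a : ℤ) :
    a / (M:ℤ) = (a % ((M:ℤ)*(N:ℤ))) / M + (N:ℤ) * (a / ((M:ℤ)*(N:ℤ))) ∧
    0 ≤ (a % ((M:ℤ)*(N:ℤ))) / M ∧ (a % ((M:ℤ)*(N:ℤ))) / M < (N:ℤ) := by
  have hb : (0:ℤ) < M := by exact_mod_cast hM
  have hc : (0:ℤ) < N := by exact_mod_cast hN
  have hbc : (0:ℤ) < (M:ℤ)*(N:ℤ) := by positivity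
  set q := a / ((M:ℤ)*(N:ℤ)) with hq
  set r := a % ((M:ℤ)*(N:ℤ)) with hr
  have ha : a = r + (N:ℤ)*q*M := by
    have := Int.mul_ediv_add_emod a ((M:ℤ)*(N:ℤ)); linarith [this]
  have hr0 : 0 ≤ r := Int.emod_nonneg a hbc.ne'
  have hrlt : r < (M:ℤ)*(N:ℤ) := Int.emod_lt_of_pos a hbc
  refine ⟨?_, Int.ediv_nonneg hr0 hb.le, ?_⟩
  · conv_lhs => rw [ha]
    rw [Int.add_mul_ediv_right _ _ hb.ne']
  · rw [Int.ediv_lt_iff_lt_mul hb]; linarith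

lemma key_a {M N P : ℕ} (hM : 0 < M) (hN : 0 < N) (hP : P = M * N) (a : ℤ) :
    (a.fdiv (M:ℤ)).fdiv (N:ℤ) = a.fdiv (P:ℤ) := by
  obtain ⟨h1, h2, h3⟩ := split_pack hM hN a
  have hc : (0:ℤ) < N := by exact_mod_cast hN
  rw [fd_eq, fd_eq, fd_eq, h1, Int.add_mul_ediv_left _ _ hc.ne',
    Int.ediv_eq_zero_of_lt h2 h3, hP]
  push_cast; ring_nf

lemma key_b {M N P : ℕ} (hM : 0 < M) (hN : 0 < N) (hP : P = M * N) (a : ℤ) :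
    ((a.fdiv (M:ℤ)).fmod (N:ℤ)).toNat = (a.fmod (P:ℤ)).toNat / M := by
  obtain ⟨h1, h2, h3⟩ := split_pack hM hN a
  have hPQ : ((P:ℕ):ℤ) = (M:ℤ)*(N:ℤ) := by rw [hP]; push_cast; ring
  rw [fd_eq, fm_eq, fm_eq, h1, Int.add_mul_emod_self_left, Int.emod_eq_of_lt h2 h3, hPQ]
  -- goal : (a % (M*N) / M).toNat = (a % (M*N)).toNat / M
  have hr0 : 0 ≤ a % ((M:ℤ)*(N:ℤ)) := Int.emod_nonneg a (by positivity)
  obtain ⟨x, hx⟩ : ∃ x : ℕ, a % ((M:ℤ)*(N:ℤ)) = (x:ℤ) := ⟨_, (Int.toNat_of_nonneg hr0).symm⟩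
  rw [hx, show ((x:ℤ)/(M:ℤ)) = ((x/M : ℕ) : ℤ) from (Int.natCast_ediv x M).symm,
    Int.toNat_natCast, Int.toNat_natCast]

lemma key_c {M N P : ℕ} (hM : 0 < M) (hN : 0 < N) (hP : P = M * N) (a : ℤ) :
    (a.fmod (M:ℤ)).toNat = (a.fmod (P:ℤ)).toNat % M := by
  have hb : (0:ℤ) < M := by exact_mod_cast hM
  have hPQ : ((P:ℕ):ℤ) = (M:ℤ)*(N:ℤ) := by rw [hP]; push_cast; ring
  have hbc : (0:ℤ) < (M:ℤ)*(N:ℤ) := by positivity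
  have ha : a = a % ((M:ℤ)*(N:ℤ)) + ((N:ℤ) * (a / ((M:ℤ)*(N:ℤ))))*M := by
    have := Int.mul_ediv_add_emod a ((M:ℤ)*(N:ℤ)); linarith
  rw [fm_eq, fm_eq, hPQ]
  conv_lhs => rw [ha]
  rw [Int.add_mul_emod_self_right]
  have hr0 : 0 ≤ a % ((M:ℤ)*(N:ℤ)) := Int.emod_nonneg a hbc.ne'
  obtain ⟨x, hx⟩ : ∃ x : ℕ, a % ((M:ℤ)*(N:ℤ)) = (x:ℤ) := ⟨_, (Int.toNat_of_nonneg hr0).symm⟩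
  rw [hx, show ((x:ℤ)%(M:ℤ)) = ((x%M : ℕ) : ℤ) from (Int.natCast_emod x M).symm,
    Int.toNat_natCast, Int.toNat_natCast]

lemma fdiv_sub_mul {M : ℕ} (hM : 0 < M) (a e : ℤ) :
    (a - (M:ℤ)*e).fdiv (M:ℤ) = a.fdiv (M:ℤ) - e := by
  have hb : (0:ℤ) < M := by exact_mod_cast hM
  rw [fd_eq, fd_eq, show a - (M:ℤ)*e = a + (-e)*M by ring, Int.add_mul_ediv_right _ _ hb.ne']
  ring

lemma fmod_sub_mul {M : ℕ} (a e : ℤ) :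
    (a - (M:ℤ)*e).fmod (M:ℤ) = a.fmod (M:ℤ) := by
  rw [fm_eq, fm_eq, show a - (M:ℤ)*e = a + (-e)*M by ring, Int.add_mul_emod_self_right]

lemma fdiv_mul_add {M : ℕ} (hM : 0 < M) (w r : ℤ) (h0 : 0 ≤ r) (h1 : r < M) :
    ((M:ℤ)*w + r).fdiv (M:ℤ) = w := by
  have hb : (0:ℤ) < M := by exact_mod_cast hM
  rw [fd_eq, show (M:ℤ)*w + r = r + w*M by ring, Int.add_mul_ediv_right _ _ hb.ne',
    Int.ediv_eq_zero_of_lt h0 h1]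
  ring

lemma fmod_mul_add {M : ℕ} (w r : ℤ) (h0 : 0 ≤ r) (h1 : r < M) :
    ((M:ℤ)*w + r).fmod (M:ℤ) = r := by
  rw [fm_eq, show (M:ℤ)*w + r = r + w*M by ring, Int.add_mul_emod_self_right,
    Int.emod_eq_of_lt h0 h1]

lemma toNat_fdiv {N : ℕ} (a : ℤ) (ha : 0 ≤ a) : (a.fdiv (N:ℤ)).toNat = a.toNat / N := by
  obtain ⟨x, rfl⟩ : ∃ x : ℕ, a = (x:ℤ) := ⟨_, (Int.toNat_of_nonneg ha).symm⟩
  rw [fd_eq, show ((x:ℤ)/(N:ℤ)) = ((x/N : ℕ) : ℤ) from (Int.natCast_ediv x N).symm,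
    Int.toNat_natCast, Int.toNat_natCast]

lemma toNat_fmod {N : ℕ} (a : ℤ) (ha : 0 ≤ a) : (a.fmod (N:ℤ)).toNat = a.toNat % N := by
  obtain ⟨x, rfl⟩ : ∃ x : ℕ, a = (x:ℤ) := ⟨_, (Int.toNat_of_nonneg ha).symm⟩
  rw [fm_eq, show ((x:ℤ)%(N:ℤ)) = ((x%N : ℕ) : ℤ) from (Int.natCast_emod x N).symm,
    Int.toNat_natCast, Int.toNat_natCast]

lemma fdiv_add_fmod' {N : ℕ} (a : ℤ) : (N:ℤ) * a.fdiv (N:ℤ) + a.fmod (N:ℤ) = a :=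
  Int.mul_fdiv_add_fmod a N

end Helper
section MoreHelpers
open Helper
variable {A : Type*}

lemma iterSub_add {M : ℕ} (hM : 0 < M) (σ : Subst A) (k j : ℕ) :
    ∀ (a : A) (x y : ℕ), iterSub M M σ (k + j) a x y =
      iterSub M M σ k (iterSub M M σ j a (x / M^k) (y / M^k)) (x % M^k) (y % M^k) := by
  induction k with
  | zero => intro a x y; simp [iterSub]
  | succ k ih =>
    intro a x y
    have hpow : M^(k+1) = M * M^k := by ring
    rw [Nat.succ_add]
    show σ (iterSub M M σ (k + j) a (x / M) (y / M)) (x % M) (y % M) = _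
    rw [ih a (x / M) (y / M)]
    show _ = σ (iterSub M M σ k (iterSub M M σ j a (x / M^(k+1)) (y / M^(k+1)))
      ((x % M^(k+1)) / M) ((y % M^(k+1)) / M)) ((x % M^(k+1)) % M) ((y % M^(k+1)) % M)
    rw [hpow, Nat.mod_mul_right_div_self, Nat.mod_mul_right_div_self,
      Nat.mod_mod_of_dvd x (Dvd.intro _ rfl), Nat.mod_mod_of_dvd y (Dvd.intro _ rfl),
      Nat.div_div_eq_div_mul, Nat.div_div_eq_div_mul]

lemma substApply_comp {M : ℕ} (hM : 0 < M) (σ : Subst A) (k : ℕ) (c : ℤ × ℤ → A)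
    (v : ℤ × ℤ) :
    substApply M M σ (substApply (M^k) (M^k) (iterSub M M σ k) c) v =
      substApply (M^(k+1)) (M^(k+1)) (iterSub M M σ (k+1)) c v := by
  have hN : 0 < M^k := Nat.pow_pos hM
  have hP : M^(k+1) = M * M^k := by ring
  show σ (iterSub M M σ k (c (((v.1.fdiv M).fdiv ((M^k:ℕ):ℤ)), ((v.2.fdiv M).fdiv ((M^k:ℕ):ℤ))))
      (((v.1.fdiv M).fmod ((M^k:ℕ):ℤ)).toNat) (((v.2.fdiv M).fmod ((M^k:ℕ):ℤ)).toNat))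
      ((v.1.fmod M).toNat) ((v.2.fmod M).toNat) = _
  rw [key_a hM hN hP, key_a hM hN hP, key_b hM hN hP, key_b hM hN hP,
    key_c (N := M^k) (P := M^(k+1)) hM hN hP, key_c (N := M^k) (P := M^(k+1)) hM hN hP]
  rfl

lemma substApply_letter {M : ℕ} (hM : 0 < M) (σ : Subst A) (k j : ℕ) (a : A)
    (w : ℤ × ℤ) (h1 : 0 ≤ w.1) (h2 : 0 ≤ w.2) :
    substApply (M^k) (M^k) (iterSub M M σ k) (letterPattern M M σ j a) w =
      letterPattern M M σ (k + j) a w := by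
  show iterSub M M σ k (iterSub M M σ j a ((w.1.fdiv ((M^k:ℕ):ℤ)).toNat) ((w.2.fdiv ((M^k:ℕ):ℤ)).toNat))
      ((w.1.fmod ((M^k:ℕ):ℤ)).toNat) ((w.2.fmod ((M^k:ℕ):ℤ)).toNat) = iterSub M M σ (k+j) a _ _
  rw [iterSub_add hM σ k j, toNat_fdiv _ h1, toNat_fdiv _ h2, toNat_fmod _ h1, toNat_fmod _ h2]

lemma substApply_mem_Xsub {M : ℕ} (hM : 0 < M) {σ : Subst A} {c : Config A}
    (hc : c ∈ Xsub M M σ) (k : ℕ) :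
    substApply (M^k) (M^k) (iterSub M M σ k) c ∈ Xsub M M σ := by
  intro D hD
  set N := M^k with hNdef
  have hN : 0 < N := Nat.pow_pos hM
  obtain ⟨a, j, u, hu⟩ := hc ((fun v : ℤ × ℤ => (v.1.fdiv N, v.2.fdiv N)) '' D) (hD.image _)
  refine ⟨a, k + j, ((N:ℤ) * u.1, (N:ℤ) * u.2), fun v hv => ?_⟩
  obtain ⟨hw1, hw2⟩ := hu _ ⟨v, hv, rfl⟩
  have hws : ((v.1.fdiv N, v.2.fdiv N) : ℤ × ℤ) - u = (v.1.fdiv N - u.1, v.2.fdiv N - u.2) := rfl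
  rw [hws] at hw1 hw2
  obtain ⟨ha1, ha2, ha3, ha4⟩ := hw1
  simp only at ha1 ha2 ha3 ha4
  have hd1 : v.1 - (N:ℤ) * u.1 = (N:ℤ) * (v.1.fdiv N - u.1) + v.1.fmod N := by
    have := fdiv_add_fmod' (N := N) v.1; ring_nf; ring_nf at this; linarith
  have hd2 : v.2 - (N:ℤ) * u.2 = (N:ℤ) * (v.2.fdiv N - u.2) + v.2.fmod N := by
    have := fdiv_add_fmod' (N := N) v.2; ring_nf; ring_nf at this; linarith
  have hm1 := fmod_nonneg' hN v.1
  have hm2 := fmod_lt' hN v.1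
  have hm3 := fmod_nonneg' hN v.2
  have hm4 := fmod_lt' hN v.2
  have hNZ : (0:ℤ) < N := by exact_mod_cast hN
  have hvs : v - ((N:ℤ) * u.1, (N:ℤ) * u.2) = (v.1 - (N:ℤ)*u.1, v.2 - (N:ℤ)*u.2) := rfl
  have hpow : ((N:ℤ)) * (M:ℤ)^j = (M:ℤ)^(k+j) := by
    rw [hNdef]; push_cast; rw [← pow_add]
  have hsup : v - ((N:ℤ) * u.1, (N:ℤ) * u.2) ∈ letterSupport M M (k + j) := by
    rw [hvs]
    refine ⟨?_, ?_, ?_, ?_⟩ <;> simp only [hd1, hd2]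
    · nlinarith
    · nlinarith
    · nlinarith
    · nlinarith
  refine ⟨hsup, ?_⟩
  -- value equality
  rw [hvs]
  have h0a : (0:ℤ) ≤ v.1 - (N:ℤ)*u.1 := by rw [hd1]; nlinarith
  have h0b : (0:ℤ) ≤ v.2 - (N:ℤ)*u.2 := by rw [hd2]; nlinarith
  rw [← substApply_letter hM σ k j a _ h0a h0b]
  show iterSub M M σ k (c (v.1.fdiv N, v.2.fdiv N)) (v.1.fmod N).toNat (v.2.fmod N).toNat
    = iterSub M M σ k (letterPattern M M σ j a
        ((v.1 - (N:ℤ)*u.1).fdiv N, (v.2 - (N:ℤ)*u.2).fdiv N))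
      ((v.1 - (N:ℤ)*u.1).fmod N).toNat ((v.2 - (N:ℤ)*u.2).fmod N).toNat
  rw [fdiv_sub_mul hN, fdiv_sub_mul hN, fmod_sub_mul, fmod_sub_mul, hw2]

lemma shift_mem_Xsub {M : ℕ} {σ : Subst A} {c : Config A} (hc : c ∈ Xsub M M σ)
    (s : ℤ × ℤ) : (fun v => c (v - s)) ∈ Xsub M M σ := by
  intro D hD
  obtain ⟨a, j, u, hu⟩ := hc ((fun v : ℤ × ℤ => v - s) '' D) (hD.image _)
  refine ⟨a, j, s + u, fun v hv => ?_⟩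
  have := hu (v - s) ⟨v, hv, rfl⟩
  rw [← sub_sub]
  exact this

lemma substApply_shift {M : ℕ} (hM : 0 < M) (σ : Subst A) (d : ℤ × ℤ → A)
    (w e : ℤ × ℤ) :
    substApply M M σ d (w.1 - (M:ℤ)*e.1, w.2 - (M:ℤ)*e.2) =
      substApply M M σ (fun u => d (u - e)) w := by
  show σ (d ((w.1 - (M:ℤ)*e.1).fdiv M, (w.2 - (M:ℤ)*e.2).fdiv M))
      ((w.1 - (M:ℤ)*e.1).fmod M).toNat ((w.2 - (M:ℤ)*e.2).fmod M).toNat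
    = σ (d ((w.1.fdiv M, w.2.fdiv M) - e)) (w.1.fmod M).toNat (w.2.fmod M).toNat
  rw [fdiv_sub_mul hM, fdiv_sub_mul hM, fmod_sub_mul, fmod_sub_mul]
  rfl

lemma substApply_block {M : ℕ} (hM : 0 < M) (σ : Subst A) (d : ℤ × ℤ → A)
    (w1 w2 : ℤ) (i j : ℕ) (hi : i < M) (hj : j < M) :
    substApply M M σ d ((M:ℤ)*w1 + (i:ℤ), (M:ℤ)*w2 + (j:ℤ)) = σ (d (w1, w2)) i j := by
  show σ (d (((M:ℤ)*w1 + (i:ℤ)).fdiv M, ((M:ℤ)*w2 + (j:ℤ)).fdiv M))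
      (((M:ℤ)*w1 + (i:ℤ)).fmod M).toNat (((M:ℤ)*w2 + (j:ℤ)).fmod M).toNat = _
  rw [fdiv_mul_add hM _ _ (Int.natCast_nonneg i) (by exact_mod_cast hi),
    fdiv_mul_add hM _ _ (Int.natCast_nonneg j) (by exact_mod_cast hj),
    fmod_mul_add _ _ (Int.natCast_nonneg i) (by exact_mod_cast hi),
    fmod_mul_add _ _ (Int.natCast_nonneg j) (by exact_mod_cast hj)]
  simp

lemma substApply_one {M : ℕ} (hM : 0 < M) (σ : Subst A) (c : ℤ × ℤ → A) (v : ℤ × ℤ) :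
    substApply M M (iterSub M M σ 1) c v = substApply M M σ c v := by
  show σ (c (v.1.fdiv M, v.2.fdiv M)) ((v.1.fmod M).toNat % M) ((v.2.fmod M).toNat % M) = _
  rw [Nat.mod_eq_of_lt (toNat_fmod_lt hM _), Nat.mod_eq_of_lt (toNat_fmod_lt hM _)]
  rfl

lemma sqSet_mono {a b : ℕ} (h : a ≤ b) : sqSet a ⊆ sqSet b := by
  intro v hv
  obtain ⟨h1, h2, h3, h4⟩ := hv
  have : (a:ℤ) ≤ b := by exact_mod_cast h
  exact ⟨h1, by linarith, h3, by linarith⟩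

end MoreHelpers
section Main
open Helper

lemma main_helper {A : Type*} (M : ℕ) (hM : 0 < M) (σ : Subst A)
    (hinv : Invertible' M M σ) (ρ : ℕ) (hρ : 0 < ρ)
    (H : ∀ (D : Set (ℤ × ℤ)) (p : ℤ × ℤ → A), sqSet ρ ⊆ D →
      (∃ c ∈ Xsub M M σ, AppearsInConfig D p c) →
      UniqueDesub M M σ (Xsub M M σ) D p) :
    ∀ k : ℕ, ∀ (D : Set (ℤ × ℤ)) (p : ℤ × ℤ → A),
      sqSet ((ρ + 1) * M ^ k - 1) ⊆ D →
      (∃ c ∈ Xsub M M σ, AppearsInConfig D p c) →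
      UniqueDesub (M ^ (k+1)) (M ^ (k+1)) (iterSub M M σ (k+1)) (Xsub M M σ) D p := by
  intro k
  induction k with
  | zero =>
    intro D p hD hApp
    have hD' : sqSet ρ ⊆ D := by
      have h : (ρ + 1) * M ^ 0 - 1 = ρ := by simp
      rwa [h] at hD
    have hU := H D p hD' hApp
    unfold UniqueDesub
    simp only [zero_add, pow_one, substApply_one hM σ]
    exact hU
  | succ k IH =>
    intro D p hD hApp
    have hMZ : (0:ℤ) < M := by exact_mod_cast hM
    set R : ℕ := (ρ + 1) * M ^ (k+1) - 1 with hRdef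
    set R' : ℕ := (ρ + 1) * M ^ k - 1 with hR'def
    have hRpos : 1 ≤ (ρ + 1) * M ^ (k+1) := Nat.mul_pos (by omega) (Nat.pow_pos hM)
    have hR'pos : 1 ≤ (ρ + 1) * M ^ k := Nat.mul_pos (by omega) (Nat.pow_pos hM)
    have hRZ : (R:ℤ) = ((ρ:ℤ)+1) * (M:ℤ)^(k+1) - 1 := by
      rw [hRdef, Nat.cast_sub hRpos]; push_cast; ring
    have hR'Z : (R':ℤ) = ((ρ:ℤ)+1) * (M:ℤ)^k - 1 := by
      rw [hR'def, Nat.cast_sub hR'pos]; push_cast; ring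
    have hcoord : ∀ t x r : ℤ, 0 ≤ t → t < M → 0 ≤ x → x < (R':ℤ) → 0 ≤ r → r < M →
        0 ≤ t + M*x + r ∧ t + M*x + r < (R:ℤ) := by
      intro t x r h1 h2 h3 h4 h5 h6
      have hxle : x ≤ (R':ℤ) - 1 := by linarith
      have hmul : (M:ℤ) * x ≤ (M:ℤ) * ((R':ℤ) - 1) :=
        mul_le_mul_of_nonneg_left hxle hMZ.le
      have hMR : (M:ℤ) * (R':ℤ) = ((ρ:ℤ)+1) * (M:ℤ)^(k+1) - M := by
        rw [hR'Z]; ring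
      have hmx : 0 ≤ (M:ℤ) * x := mul_nonneg hMZ.le h3
      refine ⟨by linarith, ?_⟩
      rw [hRZ]; linarith
    have hρR : ρ ≤ R := by
      have h1 : 1 ≤ M^(k+1) := Nat.one_le_pow _ _ hM
      have h2 : ρ + 1 ≤ (ρ+1) * M^(k+1) := Nat.le_mul_of_pos_right _ (by omega)
      omega
    have hsqρ : sqSet ρ ⊆ D := Set.Subset.trans (sqSet_mono hρR) hD
    obtain ⟨⟨t₁, c₁, hc₁, hp₁⟩, hUn1⟩ := H D p hsqρ hApp
    set t₀ : ℤ × ℤ := (t₁.1 % M, t₁.2 % M) with ht₀def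
    set f : ℤ × ℤ := (t₁.1 / M, t₁.2 / M) with hfdef
    set c₀ : Config A := fun u => c₁ (u - f) with hc₀def
    have hc₀ : c₀ ∈ Xsub M M σ := shift_mem_Xsub hc₁ f
    have ht₀1 : 0 ≤ t₀.1 ∧ t₀.1 < M := ⟨Int.emod_nonneg _ hMZ.ne', Int.emod_lt_of_pos _ hMZ⟩
    have ht₀2 : 0 ≤ t₀.2 ∧ t₀.2 < M := ⟨Int.emod_nonneg _ hMZ.ne', Int.emod_lt_of_pos _ hMZ⟩
    have hp₀ : ∀ v ∈ D, p v = substApply M M σ c₀ (v - t₀) := by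
      intro v hv
      rw [hp₁ v hv]
      have e1 := Int.mul_ediv_add_emod t₁.1 (M:ℤ)
      have e2 := Int.mul_ediv_add_emod t₁.2 (M:ℤ)
      have h1 : v - t₁ = ((v - t₀).1 - (M:ℤ)*f.1, (v - t₀).2 - (M:ℤ)*f.2) := by
        show (v.1 - t₁.1, v.2 - t₁.2) = _
        refine Prod.ext ?_ ?_
        · show v.1 - t₁.1 = v.1 - t₀.1 - (M:ℤ)*f.1
          show v.1 - t₁.1 = v.1 - t₁.1 % M - (M:ℤ)*(t₁.1 / M)
          linarith
        · show v.2 - t₁.2 = v.2 - t₀.2 - (M:ℤ)*f.2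
          show v.2 - t₁.2 = v.2 - t₁.2 % M - (M:ℤ)*(t₁.2 / M)
          linarith
      rw [h1, substApply_shift hM]
    refine ⟨?_, ?_⟩
    · -- existence
      set D' : Set (ℤ × ℤ) :=
        (fun v : ℤ × ℤ => ((v.1 - t₀.1).fdiv M, (v.2 - t₀.2).fdiv M)) '' D with hD'def
      have hsub' : sqSet R' ⊆ D' := by
        intro w hw
        obtain ⟨hw1, hw2, hw3, hw4⟩ := hw
        have c1 := hcoord t₀.1 w.1 0 ht₀1.1 ht₀1.2 hw1 hw2 le_rfl hMZ
        have c2 := hcoord t₀.2 w.2 0 ht₀2.1 ht₀2.2 hw3 hw4 le_rfl hMZ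
        have hmem : ((t₀.1 + (M:ℤ)*w.1, t₀.2 + (M:ℤ)*w.2) : ℤ × ℤ) ∈ sqSet R := by
          refine ⟨?_, ?_, ?_, ?_⟩
          · show (0:ℤ) ≤ t₀.1 + (M:ℤ)*w.1; linarith [c1.1]
          · show t₀.1 + (M:ℤ)*w.1 < (R:ℤ); linarith [c1.2]
          · show (0:ℤ) ≤ t₀.2 + (M:ℤ)*w.2; linarith [c2.1]
          · show t₀.2 + (M:ℤ)*w.2 < (R:ℤ); linarith [c2.2]
        refine ⟨(t₀.1 + (M:ℤ)*w.1, t₀.2 + (M:ℤ)*w.2), hD hmem, ?_⟩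
        show ((t₀.1 + (M:ℤ)*w.1 - t₀.1).fdiv M, (t₀.2 + (M:ℤ)*w.2 - t₀.2).fdiv M) = w
        rw [show t₀.1 + (M:ℤ)*w.1 - t₀.1 = (M:ℤ)*w.1 + 0 by ring,
          show t₀.2 + (M:ℤ)*w.2 - t₀.2 = (M:ℤ)*w.2 + 0 by ring,
          fdiv_mul_add hM _ _ le_rfl hMZ, fdiv_mul_add hM _ _ le_rfl hMZ]
      have hApp' : ∃ c ∈ Xsub M M σ, AppearsInConfig D' c₀ c :=
        ⟨c₀, hc₀, 0, fun v _ => by rw [sub_zero]⟩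
      obtain ⟨⟨s, c₂, hc₂, hs⟩, _⟩ := IH D' c₀ hsub' hApp'
      refine ⟨(t₀.1 + (M:ℤ)*s.1, t₀.2 + (M:ℤ)*s.2), c₂, hc₂, fun v hv => ?_⟩
      rw [hp₀ v hv]
      have hw : ((v.1 - t₀.1).fdiv M, (v.2 - t₀.2).fdiv M) ∈ D' := ⟨v, hv, rfl⟩
      have hval := hs _ hw
      have e1 : substApply M M σ c₀ (v - t₀)
          = substApply M M σ (substApply (M^(k+1)) (M^(k+1)) (iterSub M M σ (k+1)) c₂)
              ((v - t₀).1 - (M:ℤ)*s.1, (v - t₀).2 - (M:ℤ)*s.2) := by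
        rw [substApply_shift hM]
        show σ (c₀ ((v.1 - t₀.1).fdiv M, (v.2 - t₀.2).fdiv M))
            ((v.1 - t₀.1).fmod M).toNat ((v.2 - t₀.2).fmod M).toNat
          = σ (substApply (M^(k+1)) (M^(k+1)) (iterSub M M σ (k+1)) c₂
              (((v.1 - t₀.1).fdiv M, (v.2 - t₀.2).fdiv M) - s))
            ((v.1 - t₀.1).fmod M).toNat ((v.2 - t₀.2).fmod M).toNat
        rw [hval]
      rw [e1, substApply_comp hM]
      congr 1
      refine Prod.ext ?_ ?_
      · show v.1 - t₀.1 - (M:ℤ)*s.1 = v.1 - (t₀.1 + (M:ℤ)*s.1)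
        ring
      · show v.2 - t₀.2 - (M:ℤ)*s.2 = v.2 - (t₀.2 + (M:ℤ)*s.2)
        ring
    · -- uniqueness
      rintro t t' ⟨c, hc, hp⟩ ⟨c', hc', hp'⟩
      have hred : ∀ (c : Config A) (t : ℤ × ℤ),
          (∀ v ∈ D, p v = substApply (M^(k+1+1)) (M^(k+1+1)) (iterSub M M σ (k+1+1)) c (v - t)) →
          (∀ v ∈ D, p v = substApply M M σ
            (substApply (M^(k+1)) (M^(k+1)) (iterSub M M σ (k+1)) c) (v - t)) :=
        fun c t h v hv => by rw [h v hv, substApply_comp hM]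
      have hmod : ∀ (c : Config A) (t : ℤ × ℤ), c ∈ Xsub M M σ →
          (∀ v ∈ D, p v = substApply (M^(k+1+1)) (M^(k+1+1)) (iterSub M M σ (k+1+1)) c (v - t)) →
          t.1 % (M:ℤ) = t₀.1 % M ∧ t.2 % (M:ℤ) = t₀.2 % M := by
        intro c t hc hp
        exact hUn1 t t₀ ⟨_, substApply_mem_Xsub hM hc (k+1), hred c t hp⟩ ⟨c₀, hc₀, hp₀⟩
      obtain ⟨hm1, hm2⟩ := hmod c t hc hp
      obtain ⟨hm1', hm2'⟩ := hmod c' t' hc' hp'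
      have hdvd : ∀ a b : ℤ, a % (M:ℤ) = b % (M:ℤ) → ∃ e : ℤ, a - b = (M:ℤ) * e :=
        fun a b h => (Int.ModEq.dvd (Int.ModEq.symm h)).elim fun e he => ⟨e, he⟩
      obtain ⟨e1, he1⟩ := hdvd t.1 t₀.1 hm1
      obtain ⟨e2, he2⟩ := hdvd t.2 t₀.2 hm2
      obtain ⟨e1', he1'⟩ := hdvd t'.1 t₀.1 hm1'
      obtain ⟨e2', he2'⟩ := hdvd t'.2 t₀.2 hm2'
      have htEq : t = (t₀.1 + (M:ℤ)*e1, t₀.2 + (M:ℤ)*e2) :=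
        Prod.ext (by simp only []; linarith) (by simp only []; linarith)
      have htEq' : t' = (t₀.1 + (M:ℤ)*e1', t₀.2 + (M:ℤ)*e2') :=
        Prod.ext (by simp only []; linarith) (by simp only []; linarith)
      have hkey : ∀ (c : Config A) (e1 e2 : ℤ), c ∈ Xsub M M σ →
          (∀ v ∈ D, p v = substApply M M σ
            (substApply (M^(k+1)) (M^(k+1)) (iterSub M M σ (k+1)) c)
            (v - (t₀.1 + (M:ℤ)*e1, t₀.2 + (M:ℤ)*e2))) →
          ∀ w ∈ sqSet R', c₀ w =
            substApply (M^(k+1)) (M^(k+1)) (iterSub M M σ (k+1)) c (w - (e1, e2)) := by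
        intro c e1 e2 hc hp w hw
        obtain ⟨hw1, hw2, hw3, hw4⟩ := hw
        apply hinv
        intro i hi j hj
        have hiZ : ((i:ℤ) < M) := by exact_mod_cast hi
        have hjZ : ((j:ℤ) < M) := by exact_mod_cast hj
        have c1 := hcoord t₀.1 w.1 i ht₀1.1 ht₀1.2 hw1 hw2 (Int.natCast_nonneg i) hiZ
        have c2 := hcoord t₀.2 w.2 j ht₀2.1 ht₀2.2 hw3 hw4 (Int.natCast_nonneg j) hjZ
        set v : ℤ × ℤ := (t₀.1 + (M:ℤ)*w.1 + i, t₀.2 + (M:ℤ)*w.2 + j) with hvdef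
        have hvD : v ∈ D := hD ⟨c1.1, c1.2, c2.1, c2.2⟩
        have h1 := hp₀ v hvD
        have h2 := hp v hvD
        have ha : v - t₀ = ((M:ℤ)*w.1 + i, (M:ℤ)*w.2 + j) :=
          Prod.ext (by show t₀.1 + (M:ℤ)*w.1 + i - t₀.1 = _; ring)
            (by show t₀.2 + (M:ℤ)*w.2 + j - t₀.2 = _; ring)
        have hb : v - (t₀.1 + (M:ℤ)*e1, t₀.2 + (M:ℤ)*e2)
            = ((M:ℤ)*(w.1 - e1) + i, (M:ℤ)*(w.2 - e2) + j) :=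
          Prod.ext (by show t₀.1 + (M:ℤ)*w.1 + i - (t₀.1 + (M:ℤ)*e1) = _; ring)
            (by show t₀.2 + (M:ℤ)*w.2 + j - (t₀.2 + (M:ℤ)*e2) = _; ring)
        rw [ha, substApply_block hM σ c₀ w.1 w.2 i j hi hj] at h1
        rw [hb, substApply_block hM σ _ (w.1 - e1) (w.2 - e2) i j hi hj] at h2
        exact h1.symm.trans h2
      have hpc := hred c t hp
      rw [htEq] at hpc
      have hpc' := hred c' t' hp'
      rw [htEq'] at hpc'
      have hA := hkey c e1 e2 hc hpc
      have hB := hkey c' e1' e2' hc' hpc'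
      have IHu := (IH (sqSet R') c₀ subset_rfl ⟨c₀, hc₀, 0, fun v _ => by rw [sub_zero]⟩).2
      obtain ⟨q1, q2⟩ := IHu (e1, e2) (e1', e2') ⟨c, hc, hA⟩ ⟨c', hc', hB⟩
      have q1' : e1 % ((M^(k+1):ℕ):ℤ) = e1' % ((M^(k+1):ℕ):ℤ) := q1
      have q2' : e2 % ((M^(k+1):ℕ):ℤ) = e2' % ((M^(k+1):ℕ):ℤ) := q2
      have hc1 : ((M^(k+1+1):ℕ):ℤ) = (M:ℤ) * ((M^(k+1):ℕ):ℤ) := by push_cast; ring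
      constructor
      · show t.1 % ((M^(k+1+1):ℕ):ℤ) = t'.1 % ((M^(k+1+1):ℕ):ℤ)
        rw [show t.1 = t₀.1 + (M:ℤ)*e1 by linarith,
          show t'.1 = t₀.1 + (M:ℤ)*e1' by linarith, hc1]
        exact Int.ModEq.add_left _ (Int.ModEq.mul_left' q1')
      · show t.2 % ((M^(k+1+1):ℕ):ℤ) = t'.2 % ((M^(k+1+1):ℕ):ℤ)
        rw [show t.2 = t₀.2 + (M:ℤ)*e2 by linarith,
          show t'.2 = t₀.2 + (M:ℤ)*e2' by linarith, hc1]
        exact Int.ModEq.add_left _ (Int.ModEq.mul_left' q2')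

end Main
/-- If `σ` is an invertible substitution of size `(M,M)` such that every
pattern of `L(X^σ)` whose support contains `{0,…,ρ−1}²` can be uniquely
desubstituted by `σ`, then for every `k ≥ 1` every pattern of `L(X^σ)` whose
support contains `{0,…,(ρ+1)M^{k−1} − 2}²` can be uniquely desubstituted by
`σ^k`. -/
theorem uniqueDesub_iter {A : Type*} (M : ℕ) (hM : 0 < M) (σ : Subst A)
    (hinv : Invertible' M M σ) (ρ : ℕ) (hρ : 0 < ρ)
    (H : ∀ (D : Set (ℤ × ℤ)) (p : ℤ × ℤ → A), sqSet ρ ⊆ D →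
      (∃ c ∈ Xsub M M σ, AppearsInConfig D p c) →
      UniqueDesub M M σ (Xsub M M σ) D p) :
    ∀ k : ℕ, 1 ≤ k → ∀ (D : Set (ℤ × ℤ)) (p : ℤ × ℤ → A),
      sqSet ((ρ + 1) * M ^ (k - 1) - 1) ⊆ D →
      (∃ c ∈ Xsub M M σ, AppearsInConfig D p c) →
      UniqueDesub (M ^ k) (M ^ k) (iterSub M M σ k) (Xsub M M σ) D p := by
  intro k hk D p hD hApp
  obtain ⟨k', rfl⟩ : ∃ k', k = k' + 1 := ⟨k - 1, by omega⟩
  have h : k' + 1 - 1 = k' := by omega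
  rw [h] at hD
  exact main_helper M hM σ hinv ρ hρ H k' D p hD hApp
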